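/- Let r ≥ 3 be an integer and let k be an integer with 2 ≤ k ≤ r−1. Set γ_{r−1} = (1/2)(ε_{r−1,1} + ε_{r,2}). Then Tr( [f, L_{r−k+1}] · [γ_{r−1}, L_k] ) = 2(r−k)(k−1). -/

import Mathlib

open Matrix

/-- The nilpotent element `f = Σ_{i=1}^{r−1} i(r−i) ε_{i+1,i}` (0-based indexing). -/
noncomputable def fMat (r : ℕ) : Matrix (Fin r) (Fin r) ℂ :=
  Matrix.of fun a b =>
    if (b : ℕ) + 1 = (a : ℕ) then (((b : ℕ) : ℂ) + 1) * ((r : ℂ) - (((b : ℕ) : ℂ) + 1)) else 0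

/-- `L_i = Σ_{k=1}^{r−i+1} ε_{k,i−1+k}` (1-based `i`). -/
noncomputable def LMat (r i : ℕ) : Matrix (Fin r) (Fin r) ℂ :=
  Matrix.of fun a b => if (b : ℕ) = (a : ℕ) + (i - 1) then 1 else 0

/-- `γ_{r−1} = (1/2)(ε_{r−1,1} + ε_{r,2})` (1-based indices). -/
noncomputable def gammaRm1 (r : ℕ) : Matrix (Fin r) (Fin r) ℂ :=
  Matrix.of fun a b =>
    if ((a : ℕ) = r - 2 ∧ (b : ℕ) = 0) ∨ ((a : ℕ) = r - 1 ∧ (b : ℕ) = 1) then (1 / 2 : ℂ)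
    else 0

namespace AntidiagAux

variable {r : ℕ}

lemma trace_mul_std (M : Matrix (Fin r) (Fin r) ℂ) (i j : Fin r) (c : ℂ) :
    (M * Matrix.single i j c).trace = M j i * c := by
  have h : ∀ a : Fin r, (M * Matrix.single i j c) a a
      = if a = j then M j i * c else 0 := by
    intro a
    by_cases h : a = j
    · subst h; simp
    · simp [h]
  simp [Matrix.trace, Matrix.diag, h]

lemma std_mul_L (m : ℕ) (i j j' : Fin r) (c : ℂ) (h : (j' : ℕ) = (j : ℕ) + (m - 1)) :
    Matrix.single i j c * LMat r m = Matrix.single i j' c := by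
  ext a b
  by_cases ha : a = i
  · subst ha
    rw [Matrix.single_mul_apply_same]
    by_cases hb : b = j'
    · subst hb
      simp [LMat, h, Matrix.single]
    · have hb1 : ¬ ((b : ℕ) = (j : ℕ) + (m - 1)) := by
        intro hc
        exact hb (Fin.ext (by omega))
      have hb2 : ¬ ((j' : ℕ) = (b : ℕ)) := fun hc => hb (Fin.ext hc.symm)
      simp [LMat, hb1, Matrix.single, hb2, Fin.ext_iff]
  · rw [Matrix.single_mul_apply_of_ne (h := ha)]
    have : ¬ (i = a ∧ j' = b) := fun hc => ha hc.1.symm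
    simp [Matrix.single, this]

lemma L_mul_std (m : ℕ) (i j i' : Fin r) (c : ℂ) (h : (i : ℕ) = (i' : ℕ) + (m - 1)) :
    LMat r m * Matrix.single i j c = Matrix.single i' j c := by
  ext a b
  rw [Matrix.mul_apply, Finset.sum_eq_single i]
  · by_cases hb : b = j
    · subst hb
      by_cases ha : a = i'
      · subst ha
        simp [LMat, h, Matrix.single]
      · have ha1 : ¬ ((i : ℕ) = (a : ℕ) + (m - 1)) := by
          intro hc
          exact ha (Fin.ext (by omega))
        have ha2 : ¬ ((i' : ℕ) = (a : ℕ)) := fun hc => ha (Fin.ext hc.symm)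
        simp [LMat, ha1, Matrix.single, ha2, Fin.ext_iff]
    · have hb1 : ¬ (j = b) := fun hc => hb hc.symm
      have hb2 : ¬ (i' = a ∧ j = b) := fun hc => hb hc.2.symm
      simp [Matrix.single, hb1, hb2]
  · intro d _ hd
    have : ¬ (i = d ∧ j = b) := fun hc => hd hc.1.symm
    simp [Matrix.single, this]
  · intro hmem
    exact absurd (Finset.mem_univ i) hmem

lemma fL_apply (m : ℕ) (a b c0 : Fin r) (h1 : (c0 : ℕ) + 1 = (a : ℕ))
    (h2 : (b : ℕ) = (c0 : ℕ) + (m - 1)) :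
    (fMat r * LMat r m) a b
      = (((c0 : ℕ) : ℂ) + 1) * ((r : ℂ) - (((c0 : ℕ) : ℂ) + 1)) := by
  rw [Matrix.mul_apply, Finset.sum_eq_single c0]
  · simp [fMat, LMat, h1, h2]
  · intro d _ hd
    have : ¬ ((d : ℕ) + 1 = (a : ℕ)) := by
      intro hc
      exact hd (Fin.ext (by omega))
    simp [fMat, this]
  · intro hmem
    exact absurd (Finset.mem_univ c0) hmem

lemma fL_apply_zero (m : ℕ) (a b : Fin r) (h : (a : ℕ) = 0) :
    (fMat r * LMat r m) a b = 0 := by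
  rw [Matrix.mul_apply]
  apply Finset.sum_eq_zero
  intro d _
  have : ¬ ((d : ℕ) + 1 = (a : ℕ)) := by omega
  simp [fMat, this]

lemma Lf_apply (m : ℕ) (a b c0 : Fin r) (h1 : (c0 : ℕ) = (a : ℕ) + (m - 1))
    (h2 : (b : ℕ) + 1 = (c0 : ℕ)) :
    (LMat r m * fMat r) a b
      = (((b : ℕ) : ℂ) + 1) * ((r : ℂ) - (((b : ℕ) : ℂ) + 1)) := by
  rw [Matrix.mul_apply, Finset.sum_eq_single c0]
  · simp [fMat, LMat, h1.symm, h2]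
  · intro d _ hd
    have : ¬ ((d : ℕ) = (a : ℕ) + (m - 1)) := by
      intro hc
      exact hd (Fin.ext (by omega))
    simp [LMat, this]
  · intro hmem
    exact absurd (Finset.mem_univ c0) hmem

lemma Lf_apply_zero (m : ℕ) (a b : Fin r) (h : r ≤ (a : ℕ) + (m - 1)) :
    (LMat r m * fMat r) a b = 0 := by
  rw [Matrix.mul_apply]
  apply Finset.sum_eq_zero
  intro d _
  have : ¬ ((d : ℕ) = (a : ℕ) + (m - 1)) := by
    have := d.isLt
    omega
  simp [LMat, this]

lemma gamma_eq (hr : 3 ≤ r) :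
    gammaRm1 r = Matrix.single (⟨r - 2, by omega⟩ : Fin r) (⟨0, by omega⟩ : Fin r) (1/2 : ℂ)
      + Matrix.single (⟨r - 1, by omega⟩ : Fin r) (⟨1, by omega⟩ : Fin r) (1/2 : ℂ) := by
  ext a b
  simp only [gammaRm1, Matrix.of_apply, Matrix.add_apply, Matrix.single, Fin.ext_iff]
  split_ifs with h1 h2 h3 h2 h3 <;> simp_all <;> omega

end AntidiagAux

open AntidiagAux in
/-- for `2 ≤ k ≤ r−1`,
`Tr([f, L_{r−k+1}]·[γ_{r−1}, L_k]) = 2(r−k)(k−1)`. -/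
theorem antidiagonal_trace_identity (r k : ℕ) (hr : 3 ≤ r) (hk2 : 2 ≤ k) (hk : k ≤ r - 1) :
    ((fMat r * LMat r (r - k + 1) - LMat r (r - k + 1) * fMat r) *
        (gammaRm1 r * LMat r k - LMat r k * gammaRm1 r)).trace =
      2 * ((r : ℂ) - (k : ℂ)) * ((k : ℂ) - 1) := by
  set A := fMat r * LMat r (r - k + 1) - LMat r (r - k + 1) * fMat r with hA
  -- indices
  have hkr : k < r := by omega
  set i1 : Fin r := ⟨r - 2, by omega⟩
  set i2 : Fin r := ⟨r - 1, by omega⟩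
  set i3 : Fin r := ⟨r - 1 - k, by omega⟩
  set i4 : Fin r := ⟨r - k, by omega⟩
  set j1 : Fin r := ⟨k - 1, by omega⟩
  set j2 : Fin r := ⟨k, by omega⟩
  set j3 : Fin r := ⟨0, by omega⟩
  set j4 : Fin r := ⟨1, by omega⟩
  have hB : gammaRm1 r * LMat r k - LMat r k * gammaRm1 r
      = Matrix.single i1 j1 (1/2 : ℂ) + Matrix.single i2 j2 (1/2 : ℂ)
        - Matrix.single i3 j3 (1/2 : ℂ) - Matrix.single i4 j4 (1/2 : ℂ) := by
    rw [gamma_eq hr, add_mul, mul_add]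
    rw [std_mul_L k i1 ⟨0, by omega⟩ j1 (1/2 : ℂ) (by simp [j1] <;> omega)]
    rw [std_mul_L k i2 ⟨1, by omega⟩ j2 (1/2 : ℂ) (by simp [j2] <;> omega)]
    rw [L_mul_std k i1 j3 i3 (1/2 : ℂ) (by simp [i1, i3] <;> omega)]
    rw [L_mul_std k i2 j4 i4 (1/2 : ℂ) (by simp [i2, i4] <;> omega)]
    abel
  rw [hB]
  simp only [Matrix.mul_sub, Matrix.mul_add, Matrix.trace_sub, Matrix.trace_add,
    trace_mul_std]
  have hm : r - k + 1 - 1 = r - k := by omega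
  -- the four entries of A
  have e1 : A j1 i1 = (((k : ℂ) - 1) * ((r : ℂ) - ((k : ℂ) - 1)))
      - (((r : ℂ) - 1) * ((r : ℂ) - ((r : ℂ) - 1))) := by
    rw [hA, Matrix.sub_apply]
    rw [fL_apply (r - k + 1) j1 i1 ⟨k - 2, by omega⟩ (by simp [j1] <;> omega)
      (by simp [i1] <;> omega)]
    rw [Lf_apply (r - k + 1) j1 i1 ⟨r - 1, by omega⟩ (by simp [j1] <;> omega)
      (by simp [i1] <;> omega)]
    have h1 : ((k - 2 : ℕ) : ℂ) = (k : ℂ) - 2 := by push_cast [Nat.cast_sub hk2]; ring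
    have h2 : ((r - 2 : ℕ) : ℂ) = (r : ℂ) - 2 := by
      push_cast [Nat.cast_sub (by omega : 2 ≤ r)]; ring
    simp only [i1, Fin.val_mk, h1, h2]
    ring
  have e2 : A j2 i2 = (k : ℂ) * ((r : ℂ) - (k : ℂ)) := by
    rw [hA, Matrix.sub_apply]
    rw [fL_apply (r - k + 1) j2 i2 ⟨k - 1, by omega⟩ (by simp [j2] <;> omega)
      (by simp [i2] <;> omega)]
    rw [Lf_apply_zero (r - k + 1) j2 i2 (by simp [j2] <;> omega)]
    have h1 : ((k - 1 : ℕ) : ℂ) = (k : ℂ) - 1 := by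
      push_cast [Nat.cast_sub (by omega : 1 ≤ k)]; ring
    simp only [h1]
    ring
  have e3 : A j3 i3 = -(((r : ℂ) - (k : ℂ)) * (k : ℂ)) := by
    rw [hA, Matrix.sub_apply]
    rw [fL_apply_zero (r - k + 1) j3 i3 (by simp [j3])]
    rw [Lf_apply (r - k + 1) j3 i3 ⟨r - k, by omega⟩ (by simp [j3] <;> omega)
      (by simp [i3] <;> omega)]
    have h1 : ((r - 1 - k : ℕ) : ℂ) = (r : ℂ) - 1 - (k : ℂ) := by
      push_cast [Nat.cast_sub (by omega : k ≤ r - 1), Nat.cast_sub (by omega : 1 ≤ r)]; ring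
    simp only [i3, Fin.val_mk, h1]
    ring
  have e4 : A j4 i4 = ((r : ℂ) - 1)
      - (((r : ℂ) - (k : ℂ) + 1) * ((r : ℂ) - ((r : ℂ) - (k : ℂ) + 1))) := by
    rw [hA, Matrix.sub_apply]
    rw [fL_apply (r - k + 1) j4 i4 ⟨0, by omega⟩ (by simp [j4]) (by simp [i4] <;> omega)]
    rw [Lf_apply (r - k + 1) j4 i4 ⟨r - k + 1, by omega⟩ (by simp [j4] <;> omega)
      (by simp [i4] <;> omega)]
    have h1 : ((r - k : ℕ) : ℂ) = (r : ℂ) - (k : ℂ) := by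
      push_cast [Nat.cast_sub (by omega : k ≤ r)]; ring
    simp only [i4, Fin.val_mk, h1]
    ring
  rw [e1, e2, e3, e4]
  ring
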